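/- arXiv:math/0607397 — 6 statements merged into one kernel-verified Lean document; each statement's English description precedes it below -/
import Mathlib

section
/- Let 𝒮 be a nonempty family of subsets of X such that X∖Σ is dense in X for every Σ ∈ 𝒮, and such that 𝒮 is directed under inclusion (for all Σ, Σ' ∈ 𝒮 there exists Σ'' ∈ 𝒮 with Σ ∪ Σ' ⊆ Σ''). Then J_{L,𝒮}(X) ∩ U^∞_Λ(X) = {0}, and consequently the map ψ ↦ u(ψ) + J_{L,𝒮}(X) is an injective algebra homomorphism from C^∞(X) into the multi-foam algebra B_{L,𝒮}(X) := (C^∞(X))^Λ / J_{L,𝒮}(X). -/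
/-- The first-order partial derivative of `f` in the coordinate direction `i`. -/
noncomputable def pderiv1 (n : ℕ) (i : Fin n) (f : (Fin n → ℝ) → ℝ) :
    (Fin n → ℝ) → ℝ :=
  fun x => fderiv ℝ f x (Pi.single i 1)

/-- The multi-index partial derivative `D^p f` for a multi-index `p ∈ ℕⁿ`. -/
noncomputable def Dmulti (n : ℕ) (p : Fin n → ℕ) (f : (Fin n → ℝ) → ℝ) :
    (Fin n → ℝ) → ℝ :=
  (List.finRange n).foldr (fun i g => (pderiv1 n i)^[p i] g) f

/-- Membership in the set `J_{L,Σ}(X)`: a family `w = (w_λ)_{λ∈Λ}` belongs to it iff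
for every `x ∈ X∖Σ` there is `λ ∈ Λ` such that for all `μ ≥ λ` and all multi-indices
`p ∈ ℕⁿ` one has `(D^p w_μ)(x) = 0`. -/
def memJ {n : ℕ} {Λ : Type*} [Preorder Λ] (X Sg : Set (Fin n → ℝ))
    (w : Λ → (Fin n → ℝ) → ℝ) : Prop :=
  ∀ x ∈ X \ Sg, ∃ l : Λ, ∀ m : Λ, l ≤ m → ∀ p : Fin n → ℕ, Dmulti n p (w m) x = 0

/-- Membership in `J_{L,𝒮}(X) = ⋃_{Σ ∈ 𝒮} J_{L,Σ}(X)`. -/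
def memJS {n : ℕ} {Λ : Type*} [Preorder Λ] (X : Set (Fin n → ℝ))
    (SS : Set (Set (Fin n → ℝ))) (w : Λ → (Fin n → ℝ) → ℝ) : Prop :=
  ∃ Sg ∈ SS, memJ X Sg w

lemma Dmulti_zero (n : ℕ) (f : (Fin n → ℝ) → ℝ) :
    Dmulti n (fun _ => 0) f = f := by
  unfold Dmulti
  induction List.finRange n with
  | nil => rfl
  | cons a l ih => simp [List.foldr_cons, ih]

/-- Let `𝒮` be a nonempty family of subsets of `X`, each with dense
complement in `X`, directed under inclusion.  Then `J_{L,𝒮}(X) ∩ U^∞_Λ(X) = {0}`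
(a constant family `u(ψ)` in `J_{L,𝒮}(X)` forces `ψ = 0` on `X`), and consequently
the map `ψ ↦ u(ψ) + J_{L,𝒮}(X)` from `C^∞(X)` to the multi-foam algebra
`B_{L,𝒮}(X) = (C^∞(X))^Λ / J_{L,𝒮}(X)` is injective (it is an algebra homomorphism
by construction): if `u(ψ) - u(ψ') = u(ψ - ψ') ∈ J_{L,𝒮}(X)` then `ψ = ψ'` on `X`. -/
theorem stmt4 (n : ℕ) (X : Set (Fin n → ℝ)) (hX : IsOpen X) (hXne : X.Nonempty)
    (Λ : Type*) [PartialOrder Λ] (hdir : ∀ a b : Λ, ∃ c : Λ, a ≤ c ∧ b ≤ c)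
    (SS : Set (Set (Fin n → ℝ))) (hSSne : SS.Nonempty) (hSSX : ∀ Sg ∈ SS, Sg ⊆ X)
    (hSSdense : ∀ Sg ∈ SS, X ⊆ closure (X \ Sg))
    (hSSdir : ∀ Sg ∈ SS, ∀ Sg' ∈ SS, ∃ Sg'' ∈ SS, Sg ∪ Sg' ⊆ Sg'') :
    (∀ ψ : (Fin n → ℝ) → ℝ, ContDiffOn ℝ (⊤ : ℕ∞) ψ X →
      memJS X SS (fun _ : Λ => ψ) → ∀ x ∈ X, ψ x = 0)
    ∧ (∀ ψ ψ' : (Fin n → ℝ) → ℝ, ContDiffOn ℝ (⊤ : ℕ∞) ψ X →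
        ContDiffOn ℝ (⊤ : ℕ∞) ψ' X →
        memJS X SS (fun _ : Λ => ψ - ψ') → ∀ x ∈ X, ψ x = ψ' x) := by
  have key : ∀ ψ : (Fin n → ℝ) → ℝ, ContDiffOn ℝ (⊤ : ℕ∞) ψ X →
      memJS X SS (fun _ : Λ => ψ) → ∀ x ∈ X, ψ x = 0 := by
    intro ψ hψ hmem x hx
    obtain ⟨Sg, hSg, hJ⟩ := hmem
    have hzero : ∀ y ∈ X \ Sg, ψ y = 0 := by
      intro y hy
      obtain ⟨l, hl⟩ := hJ y hy
      have := hl l le_rfl (fun _ => 0)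
      rwa [Dmulti_zero] at this
    have hx' : x ∈ closure (X \ Sg) := hSSdense Sg hSg hx
    have hne : (nhdsWithin x (X \ Sg)).NeBot :=
      mem_closure_iff_nhdsWithin_neBot.mp hx'
    have hct : ContinuousAt ψ x :=
      hψ.continuousOn.continuousAt (hX.mem_nhds hx)
    have h1 : Filter.Tendsto ψ (nhdsWithin x (X \ Sg)) (nhds (ψ x)) :=
      hct.continuousWithinAt.tendsto
    have h2 : Filter.Tendsto ψ (nhdsWithin x (X \ Sg)) (nhds 0) := by
      refine Filter.Tendsto.congr' ?_ tendsto_const_nhds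
      filter_upwards [self_mem_nhdsWithin] with y hy
      exact (hzero y hy).symm
    exact tendsto_nhds_unique h1 h2
  refine ⟨key, ?_⟩
  intro ψ ψ' hψ hψ' hmem x hx
  have := key (ψ - ψ') (hψ.sub hψ') hmem x hx
  have h : ψ x - ψ' x = 0 := this
  linarith
end

section
/- (Lemma 1) Let Σ ⊆ X and let S = (Σ_λ)_{λ∈Λ} and S' = (Σ'_λ)_{λ∈Λ} be two representations of Σ. Then I_{L,Σ,S}(X) = I_{L,Σ,S'}(X); that is, the set I_{L,Σ,S}(X) does not depend on the chosen representation of Σ, and may therefore be denoted I_{L,Σ}(X). -/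
/-- `S = (Σ_λ)_{λ∈Λ}` is a representation of `Σ ⊆ X`: each `Σ_λ` is a subset of `X`
with `X∖Σ_λ` open, and `Σ = limsup_{λ∈Λ} Σ_λ = ⋂_{λ∈Λ} ⋃_{μ≥λ} Σ_μ`. -/
def IsRepresentation {n : ℕ} {Λ : Type*} [Preorder Λ] (X Sg : Set (Fin n → ℝ))
    (S : Λ → Set (Fin n → ℝ)) : Prop :=
  (∀ l : Λ, S l ⊆ X) ∧ (∀ l : Λ, IsOpen (X \ S l)) ∧
    Sg = ⋂ l : Λ, ⋃ m : Λ, ⋃ _ : l ≤ m, S m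

/-- Membership in the set `I_{L,Σ,S}(X)`: for every `x ∈ X∖Σ` there is `λ ∈ Λ` such
that for all `μ ≥ λ` there is an open set `Δ_μ` with `x ∈ Δ_μ ⊆ X∖Σ_μ` and
`w_μ = 0` on `Δ_μ`. -/
def memI {n : ℕ} {Λ : Type*} [Preorder Λ] (X Sg : Set (Fin n → ℝ))
    (S : Λ → Set (Fin n → ℝ)) (w : Λ → (Fin n → ℝ) → ℝ) : Prop :=
  ∀ x ∈ X \ Sg, ∃ l : Λ, ∀ m : Λ, l ≤ m →
    ∃ Δ : Set (Fin n → ℝ), IsOpen Δ ∧ x ∈ Δ ∧ Δ ⊆ X \ S m ∧ ∀ y ∈ Δ, w m y = 0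

lemma memI_mono {n : ℕ} {Λ : Type*} [Preorder Λ]
    (hdir : ∀ a b : Λ, ∃ c : Λ, a ≤ c ∧ b ≤ c)
    {X Sg : Set (Fin n → ℝ)} {S S' : Λ → Set (Fin n → ℝ)}
    (hopen : ∀ l : Λ, IsOpen (X \ S' l))
    (hrep : Sg = ⋂ l : Λ, ⋃ m : Λ, ⋃ _ : l ≤ m, S' m)
    (w : Λ → (Fin n → ℝ) → ℝ) (h : memI X Sg S w) : memI X Sg S' w := by
  intro x hx
  obtain ⟨l₁, h₁⟩ := h x hx
  have hx2 : x ∉ ⋂ l : Λ, ⋃ m : Λ, ⋃ _ : l ≤ m, S' m := by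
    rw [← hrep]; exact hx.2
  simp only [Set.mem_iInter, Set.mem_iUnion, not_forall, not_exists] at hx2
  obtain ⟨l₀, h₀⟩ := hx2
  obtain ⟨l, hl₀, hl₁⟩ := hdir l₀ l₁
  refine ⟨l, fun m hm => ?_⟩
  obtain ⟨Δ, hΔo, hxΔ, hΔs, hw⟩ := h₁ m (hl₁.trans hm)
  refine ⟨Δ ∩ (X \ S' m), hΔo.inter (hopen m), ⟨hxΔ, hx.1, h₀ m (hl₀.trans hm)⟩,
    fun y hy => hy.2, fun y hy => hw y hy.1⟩

/-- Lemma 1: if `S` and `S'` are two representations of the same set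
`Σ ⊆ X`, then `I_{L,Σ,S}(X) = I_{L,Σ,S'}(X)`; the set does not depend on the chosen
representation. -/
theorem stmt6 (n : ℕ) (X : Set (Fin n → ℝ)) (hX : IsOpen X) (hXne : X.Nonempty)
    (Λ : Type*) [PartialOrder Λ] (hdir : ∀ a b : Λ, ∃ c : Λ, a ≤ c ∧ b ≤ c)
    (Sg : Set (Fin n → ℝ)) (hSg : Sg ⊆ X)
    (S S' : Λ → Set (Fin n → ℝ))
    (hS : IsRepresentation X Sg S) (hS' : IsRepresentation X Sg S') :
    ∀ w : Λ → (Fin n → ℝ) → ℝ, memI X Sg S w ↔ memI X Sg S' w := by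
  intro w
  constructor
  · exact memI_mono hdir hS'.2.1 hS'.2.2 w
  · exact memI_mono hdir hS.2.1 hS.2.2 w
end

section
/- (Lemma 2) Let Σ, Σ' ⊆ X each admit a representation, with representations S = (Σ_λ)_{λ∈Λ} of Σ and S' = (Σ'_λ)_{λ∈Λ} of Σ'. If Σ ⊆ Σ', then I_{L,Σ,S}(X) ⊆ I_{L,Σ',S'}(X). -/
/-- Lemma 2: if `S` is a representation of `Σ`, `S'` is a representation
of `Σ'`, and `Σ ⊆ Σ'`, then `I_{L,Σ,S}(X) ⊆ I_{L,Σ',S'}(X)`. -/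
theorem stmt7 (n : ℕ) (X : Set (Fin n → ℝ)) (hX : IsOpen X) (hXne : X.Nonempty)
    (Λ : Type*) [PartialOrder Λ] (hdir : ∀ a b : Λ, ∃ c : Λ, a ≤ c ∧ b ≤ c)
    (Sg Sg' : Set (Fin n → ℝ)) (hSg : Sg ⊆ X) (hSg' : Sg' ⊆ X)
    (S S' : Λ → Set (Fin n → ℝ))
    (hS : IsRepresentation X Sg S) (hS' : IsRepresentation X Sg' S')
    (hsub : Sg ⊆ Sg')
    (w : Λ → (Fin n → ℝ) → ℝ) (hmem : memI X Sg S w) :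
    memI X Sg' S' w := by
  intro x hx
  obtain ⟨hxX, hxSg'⟩ := hx
  have hxSg : x ∈ X \ Sg := ⟨hxX, fun h => hxSg' (hsub h)⟩
  obtain ⟨l, hl⟩ := hmem x hxSg
  obtain ⟨_, hS'open, hS'eq⟩ := hS'
  have : x ∉ ⋂ l : Λ, ⋃ m : Λ, ⋃ _ : l ≤ m, S' m := by rw [← hS'eq]; exact hxSg'
  rw [Set.mem_iInter] at this
  push_neg at this
  obtain ⟨l', hl'⟩ := this
  simp only [Set.mem_iUnion, not_exists] at hl'
  obtain ⟨c, hlc, hl'c⟩ := hdir l l'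
  refine ⟨c, fun m hm => ?_⟩
  obtain ⟨Δ, hΔo, hxΔ, hΔsub, hΔw⟩ := hl m (hlc.trans hm)
  refine ⟨Δ ∩ (X \ S' m), hΔo.inter (hS'open m), ⟨hxΔ, hxX, hl' m (hl'c.trans hm)⟩,
    fun y hy => hy.2, fun y hy => hΔw y hy.1⟩
end

section
/- Let Σ ⊆ X admit a representation S = (Σ_λ)_{λ∈Λ}. Then for every multi-index p ∈ ℕⁿ, the termwise p-th order partial derivation maps I_{L,Σ,S}(X) into itself: if w = (w_λ)_{λ∈Λ} ∈ I_{L,Σ,S}(X), then (D^p w_λ)_{λ∈Λ} ∈ I_{L,Σ,S}(X). -/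
lemma pderiv1_zero_on {n : ℕ} {Δ : Set (Fin n → ℝ)} (hΔ : IsOpen Δ) (i : Fin n)
    {f : (Fin n → ℝ) → ℝ} (hf : ∀ y ∈ Δ, f y = 0) :
    ∀ y ∈ Δ, pderiv1 n i f y = 0 := by
  intro y hy
  have hev : f =ᶠ[nhds y] (fun _ => (0 : ℝ)) :=
    Filter.eventually_of_mem (hΔ.mem_nhds hy) hf
  have := Filter.EventuallyEq.fderiv_eq (𝕜 := ℝ) hev
  simp [pderiv1, this]

lemma iter_zero_on {n : ℕ} {Δ : Set (Fin n → ℝ)} (hΔ : IsOpen Δ) (i : Fin n) (k : ℕ)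
    {f : (Fin n → ℝ) → ℝ} (hf : ∀ y ∈ Δ, f y = 0) :
    ∀ y ∈ Δ, (pderiv1 n i)^[k] f y = 0 := by
  induction k generalizing f with
  | zero => simpa using hf
  | succ k ih =>
      intro y hy
      rw [Function.iterate_succ_apply]
      exact ih (pderiv1_zero_on hΔ i hf) y hy

lemma dmulti_zero_on {n : ℕ} {Δ : Set (Fin n → ℝ)} (hΔ : IsOpen Δ) (p : Fin n → ℕ)
    {f : (Fin n → ℝ) → ℝ} (hf : ∀ y ∈ Δ, f y = 0) :
    ∀ y ∈ Δ, Dmulti n p f y = 0 := by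
  unfold Dmulti
  generalize List.finRange n = L
  induction L generalizing f with
  | nil => simpa using hf
  | cons i L ih =>
      intro y hy
      exact iter_zero_on hΔ i (p i) (ih hf) y hy

/-- if `Σ ⊆ X` admits a representation `S`, then for every multi-index
`p ∈ ℕⁿ` the termwise `p`-th order partial derivation maps `I_{L,Σ,S}(X)` into itself. -/
theorem stmt9 (n : ℕ) (X : Set (Fin n → ℝ)) (hX : IsOpen X) (hXne : X.Nonempty)
    (Λ : Type*) [PartialOrder Λ] (hdir : ∀ a b : Λ, ∃ c : Λ, a ≤ c ∧ b ≤ c)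
    (Sg : Set (Fin n → ℝ)) (hSg : Sg ⊆ X)
    (S : Λ → Set (Fin n → ℝ)) (hS : IsRepresentation X Sg S)
    (w : Λ → (Fin n → ℝ) → ℝ) (hw : ∀ l, ContDiffOn ℝ (⊤ : ℕ∞) (w l) X)
    (hmem : memI X Sg S w) (p : Fin n → ℕ) :
    memI X Sg S (fun l => Dmulti n p (w l)) := by
  intro x hx
  obtain ⟨l, hl⟩ := hmem x hx
  refine ⟨l, fun m hm => ?_⟩
  obtain ⟨Δ, hΔo, hxΔ, hΔs, hz⟩ := hl m hm
  exact ⟨Δ, hΔo, hxΔ, hΔs, dmulti_zero_on hΔo p hz⟩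
end

section
/- Let 𝒮_L be a nonempty family of subsets of X such that every Σ ∈ 𝒮_L admits a representation and X∖Σ is dense in X for every Σ ∈ 𝒮_L. Then I_{L,𝒮_L}(X) ∩ U^∞_Λ(X) = {0}: if ψ ∈ C^∞(X) and the constant family u(ψ) belongs to I_{L,Σ}(X) for some Σ ∈ 𝒮_L, then ψ = 0 on X. -/
/-- Membership in `I_{L,𝒮_L}(X) = ⋃_{Σ ∈ 𝒮_L} I_{L,Σ}(X)`. -/
def memIS {n : ℕ} {Λ : Type*} [Preorder Λ] (X : Set (Fin n → ℝ))
    (SS : Set (Set (Fin n → ℝ))) (w : Λ → (Fin n → ℝ) → ℝ) : Prop :=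
  ∃ Sg ∈ SS, ∃ S : Λ → Set (Fin n → ℝ), IsRepresentation X Sg S ∧ memI X Sg S w

/-- if every `Σ ∈ 𝒮_L` admits a representation and has dense complement
`X∖Σ` in `X`, then `I_{L,𝒮_L}(X) ∩ U^∞_Λ(X) = {0}`: if `ψ ∈ C^∞(X)` and the constant
family `u(ψ)` belongs to `I_{L,Σ}(X)` for some `Σ ∈ 𝒮_L`, then `ψ = 0` on `X`. -/
theorem stmt12 (n : ℕ) (X : Set (Fin n → ℝ)) (hX : IsOpen X) (hXne : X.Nonempty)
    (Λ : Type*) [PartialOrder Λ] (hdir : ∀ a b : Λ, ∃ c : Λ, a ≤ c ∧ b ≤ c)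
    (SS : Set (Set (Fin n → ℝ))) (hSSne : SS.Nonempty)
    (hSSrep : ∀ Sg ∈ SS, ∃ S : Λ → Set (Fin n → ℝ), IsRepresentation X Sg S)
    (hSSdense : ∀ Sg ∈ SS, X ⊆ closure (X \ Sg))
    (ψ : (Fin n → ℝ) → ℝ) (hψ : ContDiffOn ℝ (⊤ : ℕ∞) ψ X)
    (hmem : memIS X SS (fun _ : Λ => ψ)) :
    ∀ x ∈ X, ψ x = 0 := by
  obtain ⟨Sg, hSg, S, hrep, hmI⟩ := hmem
  -- ψ vanishes on X \ Sg
  have hzero : ∀ y ∈ X \ Sg, ψ y = 0 := by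
    intro y hy
    obtain ⟨l, hl⟩ := hmI y hy
    obtain ⟨Δ, _, hyΔ, _, hΔ0⟩ := hl l le_rfl
    exact hΔ0 y hyΔ
  intro x hx
  have hcont : ContinuousAt ψ x :=
    (hψ.continuousOn.continuousAt (hX.mem_nhds hx))
  have hne : (nhdsWithin x (X \ Sg)).NeBot :=
    mem_closure_iff_nhdsWithin_neBot.mp (hSSdense Sg hSg hx)
  have h1 : Filter.Tendsto ψ (nhdsWithin x (X \ Sg)) (nhds (ψ x)) :=
    hcont.continuousWithinAt.tendsto
  have h2 : Filter.Tendsto ψ (nhdsWithin x (X \ Sg)) (nhds 0) := by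
    have : Filter.EventuallyEq (nhdsWithin x (X \ Sg)) ψ (fun _ => 0) :=
      Filter.eventually_iff_exists_mem.mpr ⟨X \ Sg, self_mem_nhdsWithin, hzero⟩
    exact Filter.Tendsto.congr' this.symm tendsto_const_nhds
  exact tendsto_nhds_unique h1 h2
end

section
/- (Relation (2.22)) With L = (ℕ, ≤) the natural numbers with their usual order, and 𝒮_nd the family of all subsets of X that are closed and nowhere dense in X, one has the equality of ideals I_{ℕ,𝒮_nd}(X) = J_{ℕ,𝒮_nd}(X); that is, ⋃_{Σ ∈ 𝒮_nd} I_{ℕ,Σ}(X) = ⋃_{Σ ∈ 𝒮_nd} J_{ℕ,Σ}(X) as subsets of (C^∞(X))^ℕ. -/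
/-- `Σ` is a closed and nowhere dense subset of `X` (in the subspace topology of the
open set `X ⊆ ℝⁿ`): `Σ ⊆ X`, `X∖Σ` is open, and—`Σ` being relatively closed—nowhere
density of `Σ` in `X` amounts to density of `X∖Σ` in `X`. -/
def ClosedNwdIn (n : ℕ) (X Sg : Set (Fin n → ℝ)) : Prop :=
  Sg ⊆ X ∧ IsOpen (X \ Sg) ∧ X ⊆ closure (X \ Sg)

lemma aux_pderiv1_contDiffOn {n : ℕ} {X : Set (Fin n → ℝ)} (hX : IsOpen X)
    {f : (Fin n → ℝ) → ℝ} (hf : ContDiffOn ℝ (⊤ : ℕ∞) f X) (i : Fin n) :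
    ContDiffOn ℝ (⊤ : ℕ∞) (pderiv1 n i f) X := by
  have h1 : ContDiffOn ℝ (⊤ : ℕ∞) (fun x => fderiv ℝ f x) X :=
    hf.fderiv_of_isOpen hX (by exact le_refl _)
  exact (ContinuousLinearMap.apply ℝ ℝ
    (Pi.single i 1 : Fin n → ℝ)).contDiff.comp_contDiffOn h1

lemma aux_iter_contDiffOn {n : ℕ} {X : Set (Fin n → ℝ)} (hX : IsOpen X)
    {f : (Fin n → ℝ) → ℝ} (hf : ContDiffOn ℝ (⊤ : ℕ∞) f X) (i : Fin n) (k : ℕ) :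
    ContDiffOn ℝ (⊤ : ℕ∞) ((pderiv1 n i)^[k] f) X := by
  induction k with
  | zero => simpa using hf
  | succ k ih =>
    rw [Function.iterate_succ_apply']
    exact aux_pderiv1_contDiffOn hX ih i

lemma aux_Dmulti_contDiffOn {n : ℕ} {X : Set (Fin n → ℝ)} (hX : IsOpen X)
    {f : (Fin n → ℝ) → ℝ} (hf : ContDiffOn ℝ (⊤ : ℕ∞) f X) (p : Fin n → ℕ) :
    ContDiffOn ℝ (⊤ : ℕ∞) (Dmulti n p f) X := by
  unfold Dmulti
  induction (List.finRange n) with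
  | nil => simpa using hf
  | cons i t ih =>
    simp only [List.foldr_cons]
    exact aux_iter_contDiffOn hX ih i (p i)

lemma aux_pderiv1_zero {n : ℕ} {Δ : Set (Fin n → ℝ)} (hΔ : IsOpen Δ)
    {f : (Fin n → ℝ) → ℝ} (hf : ∀ y ∈ Δ, f y = 0) (i : Fin n) :
    ∀ y ∈ Δ, pderiv1 n i f y = 0 := by
  intro y hy
  have h0 : f =ᶠ[nhds y] (fun _ => (0 : ℝ)) :=
    Filter.eventuallyEq_of_mem (hΔ.mem_nhds hy) hf
  have := Filter.EventuallyEq.fderiv_eq (𝕜 := ℝ) h0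
  simp [pderiv1, this]

lemma aux_iter_zero {n : ℕ} {Δ : Set (Fin n → ℝ)} (hΔ : IsOpen Δ)
    {f : (Fin n → ℝ) → ℝ} (hf : ∀ y ∈ Δ, f y = 0) (i : Fin n) (k : ℕ) :
    ∀ y ∈ Δ, (pderiv1 n i)^[k] f y = 0 := by
  induction k with
  | zero => simpa using hf
  | succ k ih =>
    rw [Function.iterate_succ_apply']
    exact aux_pderiv1_zero hΔ ih i

lemma aux_Dmulti_zero {n : ℕ} {Δ : Set (Fin n → ℝ)} (hΔ : IsOpen Δ)
    {f : (Fin n → ℝ) → ℝ} (hf : ∀ y ∈ Δ, f y = 0) (p : Fin n → ℕ) :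
    ∀ y ∈ Δ, Dmulti n p f y = 0 := by
  unfold Dmulti
  induction (List.finRange n) with
  | nil => simpa using hf
  | cons i t ih =>
    simp only [List.foldr_cons]
    exact aux_iter_zero hΔ ih i (p i)

lemma aux_Dmulti_zero_index {n : ℕ} (f : (Fin n → ℝ) → ℝ) :
    Dmulti n (fun _ => 0) f = f := by
  unfold Dmulti
  induction (List.finRange n) with
  | nil => rfl
  | cons i t ih => simp [ih]

/-- relation (2.22): with `L = (ℕ, ≤)` and `𝒮_nd` the family of all
closed nowhere dense subsets of `X`, one has `I_{ℕ,𝒮_nd}(X) = J_{ℕ,𝒮_nd}(X)` as subsets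
of `(C^∞(X))^ℕ`, where for closed `Σ` the ideal `I_{ℕ,Σ}(X)` is computed via the
constant representation `Σ_ν = Σ`. -/
theorem stmt16 (n : ℕ) (X : Set (Fin n → ℝ)) (hX : IsOpen X) (hXne : X.Nonempty)
    (w : ℕ → (Fin n → ℝ) → ℝ) (hw : ∀ ν : ℕ, ContDiffOn ℝ (⊤ : ℕ∞) (w ν) X) :
    (∃ Sg : Set (Fin n → ℝ), ClosedNwdIn n X Sg
        ∧ memI X Sg (fun _ : ℕ => Sg) w)
    ↔ (∃ Sg : Set (Fin n → ℝ), ClosedNwdIn n X Sg ∧ memJ X Sg w) := by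
  constructor
  · rintro ⟨Sg, hSg, hI⟩
    refine ⟨Sg, hSg, fun x hx => ?_⟩
    obtain ⟨l, hl⟩ := hI x hx
    refine ⟨l, fun m hm p => ?_⟩
    obtain ⟨Δ, hΔo, hxΔ, _, hz⟩ := hl m hm
    exact aux_Dmulti_zero hΔo hz p x hxΔ
  · rintro ⟨Sg, ⟨hsub, hVopen, hdense⟩, hJ⟩
    set V := X \ Sg with hV
    set E : ℕ → Set (Fin n → ℝ) := fun ν =>
      {x | x ∈ V ∧ ∀ μ, ν ≤ μ → ∀ p : Fin n → ℕ, Dmulti n p (w μ) x = 0} with hE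
    set F : ℕ → Set (Fin n → ℝ) := fun ν => E ν ∪ Vᶜ with hF
    have hFclosed : ∀ ν, IsClosed (F ν) := by
      intro ν
      rw [← isOpen_compl_iff, isOpen_iff_mem_nhds]
      intro x hx
      simp only [hF, Set.compl_union, compl_compl, Set.mem_inter_iff,
        Set.mem_compl_iff] at hx
      obtain ⟨hxE, hxV⟩ := hx
      have hex : ∃ μ, ν ≤ μ ∧ ∃ p, Dmulti n p (w μ) x ≠ 0 := by
        by_contra h
        push_neg at h
        exact hxE ⟨hxV, fun μ hμ p => h μ hμ p⟩
      obtain ⟨μ, hμ, p, hp⟩ := hex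
      have hcont : ContinuousAt (Dmulti n p (w μ)) x :=
        (aux_Dmulti_contDiffOn hX (hw μ) p).continuousOn.continuousAt
          (hX.mem_nhds hxV.1)
      have hne : {y | Dmulti n p (w μ) y ≠ 0} ∈ nhds x := hcont.eventually_ne hp
      have hVn : V ∈ nhds x := hVopen.mem_nhds hxV
      refine Filter.mem_of_superset (Filter.inter_mem hne hVn) ?_
      intro y hy
      simp only [hF, Set.compl_union, compl_compl, Set.mem_inter_iff,
        Set.mem_compl_iff]
      exact ⟨fun hyE => hy.1 (hyE.2 μ hμ p), hy.2⟩
    have hFcover : ⋃ ν, F ν = Set.univ := by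
      ext x
      simp only [Set.mem_iUnion, Set.mem_univ, iff_true]
      by_cases hx : x ∈ V
      · obtain ⟨l, hl⟩ := hJ x hx
        exact ⟨l, Or.inl ⟨hx, hl⟩⟩
      · exact ⟨0, Or.inr hx⟩
    have hD : Dense (⋃ ν, interior (F ν)) :=
      dense_iUnion_interior_of_closed hFclosed hFcover
    set Ω := V ∩ ⋃ ν, interior (F ν) with hΩ
    have hΩopen : IsOpen Ω := hVopen.inter (isOpen_iUnion fun ν => isOpen_interior)
    have hΩX : Ω ⊆ X := fun y hy => hy.1.1
    have hXdiff : X \ (X \ Ω) = Ω := Set.diff_diff_cancel_left hΩX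
    refine ⟨X \ Ω, ⟨Set.diff_subset, ?_, ?_⟩, ?_⟩
    · rw [hXdiff]; exact hΩopen
    · rw [hXdiff]
      have hVsub : V ⊆ closure Ω := by
        intro y hy
        rw [mem_closure_iff]
        intro o ho hyo
        obtain ⟨z, hz1, hz2⟩ := hD.exists_mem_open (ho.inter hVopen) ⟨y, hyo, hy⟩
        exact ⟨z, hz2.1, hz2.2, hz1⟩
      exact fun x hxX => closure_minimal hVsub isClosed_closure (hdense hxX)
    · intro x hx
      have hxΩ : x ∈ Ω := hXdiff ▸ hx
      obtain ⟨hxV, hxU⟩ := hxΩ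
      obtain ⟨ν, hν⟩ := Set.mem_iUnion.1 hxU
      refine ⟨ν, fun m hm => ?_⟩
      refine ⟨interior (F ν) ∩ V, isOpen_interior.inter hVopen, ⟨hν, hxV⟩, ?_, ?_⟩
      · intro y hy
        have : y ∈ Ω := ⟨hy.2, Set.mem_iUnion.2 ⟨ν, hy.1⟩⟩
        rw [hXdiff]
        exact this
      · intro y hy
        have hyE : y ∈ E ν := by
          rcases interior_subset hy.1 with h | h
          · exact h
          · exact absurd hy.2 h
        have := hyE.2 m hm (fun _ => 0)
        rwa [aux_Dmulti_zero_index] at this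
end
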